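/- Let (G,M,I) be a formal context whose incompatibility graph is connected and bipartite. Then there exist two disjoint Ferrers relations F1, F2 with F1 ∪ F2 = I, these two factors are unique up to swapping (any two ordinal two-factorizations of (G,M,I) into disjoint Ferrers relations coincide as unordered pairs), and F1 and F2 are exactly the two bipartition (color) classes of the incompatibility graph. -/

import Mathlib

set_option linter.unnecessarySimpa false

/-- A Ferrers relation: whenever `(g,m) ∈ F` and `(h,n) ∈ F`,
then `(g,n) ∈ F` or `(h,m) ∈ F`. -/
def IsFerrers {G M : Type*} (F : Set (G × M)) : Prop :=
  ∀ g h : G, ∀ m n : M, (g, m) ∈ F → (h, n) ∈ F → (g, n) ∈ F ∨ (h, m) ∈ F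

/-- Two pairs `p, q ∈ I` are incompatible if `(p.1, q.2) ∉ I` and `(q.1, p.2) ∉ I`. -/
def Incompatible {G M : Type*} (I : Set (G × M)) (p q : G × M) : Prop :=
  p ∈ I ∧ q ∈ I ∧ (p.1, q.2) ∉ I ∧ (q.1, p.2) ∉ I

/-- The incompatibility graph of a formal context `(G, M, I)`: vertices are the
elements of `I`, with an edge between each pair of incompatible elements. -/
def IncompGraph {G M : Type*} (I : Set (G × M)) : SimpleGraph I where
  Adj p q := Incompatible I p.1 q.1
  symm := ⟨fun _ _ h => ⟨h.2.1, h.1, h.2.2.2, h.2.2.1⟩⟩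
  loopless := ⟨fun p h => h.2.2.1 (by simpa using h.1)⟩

section AuxLemmas

variable {G M : Type*} {I : Set (G × M)}

private lemma fin2_three (a b c : Fin 2) (h1 : a ≠ b) (h2 : c ≠ b) : a = c := by
  revert a b c; decide

private lemma fin2_cases (a : Fin 2) : a = 0 ∨ a = 1 := by
  revert a; decide

private lemma fin2_step (a b x a' b' x' : Fin 2) (hab : a ≠ b) (hab' : a' ≠ b')
    (h : b = x ↔ b' = x') : a = x ↔ a' = x' := by
  revert a b x a' b' x'; decide

private lemma fin2_tr (a b a' b' : Fin 2) (h : a = b ↔ a' = b') (he : b = b') :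
    a = a' := by revert a b a' b'; decide

private lemma fin2_tr' (a b a' b' : Fin 2) (h : a = b ↔ a' = b') (he : b ≠ b') :
    (a' = 0 ↔ a = 1) ∧ (a' = 1 ↔ a = 0) := by revert a b a' b'; decide

/-- Lemma A: there is no pair `p = (g,m)`, `q = (h,n)` of the same color whose
cross `(g,n)` lies in `I` with the opposite color while `(h,m) ∉ I`. -/
private lemma lemA (C : (IncompGraph I).Coloring (Fin 2))
    (hconn : (IncompGraph I).Connected)
    {g h : G} {m n : M} (hp : (g, m) ∈ I) (hq : (h, n) ∈ I) (hr : (g, n) ∈ I)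
    (hpq : C ⟨(g, m), hp⟩ = C ⟨(h, n), hq⟩)
    (hrc : C ⟨(g, n), hr⟩ ≠ C ⟨(g, m), hp⟩)
    (hv : (h, m) ∉ I) : False := by
  obtain ⟨W⟩ := hconn.preconnected ⟨(g, n), hr⟩ ⟨(h, n), hq⟩
  -- the invariant is carried along any walk
  have aux : ∀ (x y : I) (_ : (IncompGraph I).Walk x y),
      (∃ (hs : (h, (x : G × M).2) ∈ I) (ht : ((x : G × M).1, m) ∈ I),
        C ⟨(h, (x : G × M).2), hs⟩ ≠ C x ∧ C ⟨((x : G × M).1, m), ht⟩ ≠ C x) →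
      (∃ (hs : (h, (y : G × M).2) ∈ I) (ht : ((y : G × M).1, m) ∈ I),
        C ⟨(h, (y : G × M).2), hs⟩ ≠ C y ∧ C ⟨((y : G × M).1, m), ht⟩ ≠ C y) := by
    intro x y W
    induction W with
    | nil => exact id
    | @cons u v w hadj W ih =>
      rintro ⟨hs, ht, hcs, hct⟩
      apply ih
      obtain ⟨-, hvI, h1, h2⟩ := hadj
      have hCuv : C u ≠ C v := C.valid (by exact ⟨u.2, hvI, h1, h2⟩)
      have hsv : C ⟨(h, (u : G × M).2), hs⟩ = C v := fin2_three _ _ _ hcs hCuv.symm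
      have htv : C ⟨((u : G × M).1, m), ht⟩ = C v := fin2_three _ _ _ hct hCuv.symm
      have hs' : (h, (v : G × M).2) ∈ I := by
        by_contra hns
        exact C.valid
          (show (IncompGraph I).Adj ⟨(h, (u : G × M).2), hs⟩ v from ⟨hs, hvI, hns, h2⟩) hsv
      have ht' : ((v : G × M).1, m) ∈ I := by
        by_contra hnt
        exact C.valid
          (show (IncompGraph I).Adj ⟨((u : G × M).1, m), ht⟩ v from ⟨ht, hvI, h1, hnt⟩) htv
      have hcs' : C ⟨(h, (v : G × M).2), hs'⟩ ≠ C v := by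
        intro he
        exact C.valid
          (show (IncompGraph I).Adj ⟨(h, (v : G × M).2), hs'⟩ ⟨((u : G × M).1, m), ht⟩ from
            ⟨hs', ht, hv, h1⟩) (he.trans htv.symm)
      have hct' : C ⟨((v : G × M).1, m), ht'⟩ ≠ C v := by
        intro he
        exact C.valid
          (show (IncompGraph I).Adj ⟨((v : G × M).1, m), ht'⟩ ⟨(h, (u : G × M).2), hs⟩ from
            ⟨ht', hs, h2, hv⟩) (he.trans hsv.symm)
      exact ⟨hs', ht', hcs', hct'⟩
  obtain ⟨-, ht, -, -⟩ :=
    aux _ _ W ⟨hq, hp, fun he => hrc (he.symm.trans hpq.symm), hrc.symm⟩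
  exact hv ht

/-- Lemma B: there is no pair `p = (g,m)`, `q = (h,n)` of the same color with
both crosses in `I` of the opposite color. -/
private lemma lemB (C : (IncompGraph I).Coloring (Fin 2))
    (hconn : (IncompGraph I).Connected)
    {g h : G} {m n : M} (hp : (g, m) ∈ I) (hq : (h, n) ∈ I) (hr : (g, n) ∈ I)
    (hv : (h, m) ∈ I)
    (hpq : C ⟨(g, m), hp⟩ = C ⟨(h, n), hq⟩)
    (hrc : C ⟨(g, n), hr⟩ ≠ C ⟨(g, m), hp⟩)
    (hvc : C ⟨(h, m), hv⟩ ≠ C ⟨(g, m), hp⟩) : False := by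
  obtain ⟨W⟩ := hconn.preconnected ⟨(g, n), hr⟩ ⟨(h, n), hq⟩
  have hne : (⟨(g, n), hr⟩ : I) ≠ ⟨(h, n), hq⟩ := by
    intro he
    exact hrc ((congrArg C he).trans hpq.symm)
  obtain ⟨w, hadj, -, -⟩ := W.exists_eq_cons_of_ne hne
  obtain ⟨-, hwI, h1, h2⟩ := hadj
  -- h1 : (g, w.2) ∉ I, h2 : (w.1, n) ∉ I
  have hCw : C ⟨(g, n), hr⟩ ≠ C w := C.valid (by exact ⟨hr, hwI, h1, h2⟩)
  have hwp : C w = C ⟨(g, m), hp⟩ := fin2_three _ _ _ hCw.symm hrc.symm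
  -- t := (w.1, m) ∈ I since p and w have the same color
  have ht : ((w : G × M).1, m) ∈ I := by
    by_contra hnt
    exact C.valid
      (show (IncompGraph I).Adj ⟨(g, m), hp⟩ w from ⟨hp, hwI, h1, hnt⟩) hwp.symm
  -- t has the same color as p (else lemma A applies to the pair (w, p))
  have hct : C ⟨((w : G × M).1, m), ht⟩ = C ⟨(g, m), hp⟩ := by
    by_contra hne'
    exact lemA C hconn (g := (w : G × M).1) (m := (w : G × M).2) (h := g) (n := m)
      w.2 hp ht (by exact hwp) (fun he => hne' (he.trans hwp)) h1
  -- now the pair (q, t) with cross (h, m) ∈ C2 and (w.1, n) ∉ I contradicts lemma A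
  exact lemA C hconn (g := h) (m := n) (h := (w : G × M).1) (n := m)
    hq ht hv (hpq.symm.trans hct.symm) (fun he => hvc (he.trans (hpq.symm.trans hct.symm) |>.trans hct)) h2

end AuxLemmas

theorem connected_bipartite_unique_disjoint_factorization {G M : Type*}
    (I : Set (G × M)) (hconn : (IncompGraph I).Connected)
    (hbip : (IncompGraph I).Colorable 2) :
    ∃ F1 F2 : Set (G × M),
      IsFerrers F1 ∧ IsFerrers F2 ∧ Disjoint F1 F2 ∧ F1 ∪ F2 = I ∧
      (∀ p ∈ F1, ∀ q ∈ F1, ¬ Incompatible I p q) ∧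
      (∀ p ∈ F2, ∀ q ∈ F2, ¬ Incompatible I p q) ∧
      (∀ G1 G2 : Set (G × M), IsFerrers G1 → IsFerrers G2 → Disjoint G1 G2 →
        G1 ∪ G2 = I → (G1 = F1 ∧ G2 = F2) ∨ (G1 = F2 ∧ G2 = F1)) := by
  obtain ⟨C⟩ := hbip
  -- the two color classes
  set F1 : Set (G × M) := {x | ∃ hx : x ∈ I, C ⟨x, hx⟩ = 0} with hF1def
  set F2 : Set (G × M) := {x | ∃ hx : x ∈ I, C ⟨x, hx⟩ = 1} with hF2def
  have hF1I : F1 ⊆ I := fun x hx => hx.1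
  have hF2I : F2 ⊆ I := fun x hx => hx.1
  -- each color class is a Ferrers relation
  have classFerrers : ∀ i : Fin 2, IsFerrers {x : G × M | ∃ hx : x ∈ I, C ⟨x, hx⟩ = i} := by
    intro i g h m n hgm hhn
    obtain ⟨hp, hcp⟩ := hgm
    obtain ⟨hq, hcq⟩ := hhn
    have hpq : C ⟨(g, m), hp⟩ = C ⟨(h, n), hq⟩ := hcp.trans hcq.symm
    have hor : (g, n) ∈ I ∨ (h, m) ∈ I := by
      by_contra hcon
      push_neg at hcon
      exact C.valid
        (show (IncompGraph I).Adj ⟨(g, m), hp⟩ ⟨(h, n), hq⟩ from ⟨hp, hq, hcon.1, hcon.2⟩) hpq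
    rcases hor with hgn | hhm
    · by_cases hcr : C ⟨(g, n), hgn⟩ = i
      · exact Or.inl ⟨hgn, hcr⟩
      · have hrc : C ⟨(g, n), hgn⟩ ≠ C ⟨(g, m), hp⟩ := fun he => hcr (he.trans hcp)
        by_cases hhm : (h, m) ∈ I
        · by_cases hcv : C ⟨(h, m), hhm⟩ = i
          · exact Or.inr ⟨hhm, hcv⟩
          · exact (lemB C hconn hp hq hgn hhm hpq hrc
              (fun he => hcv (he.trans hcp))).elim
        · exact (lemA C hconn hp hq hgn hpq hrc hhm).elim
    · by_cases hcv : C ⟨(h, m), hhm⟩ = i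
      · exact Or.inr ⟨hhm, hcv⟩
      · have hvc : C ⟨(h, m), hhm⟩ ≠ C ⟨(h, n), hq⟩ := fun he => hcv (he.trans hcq)
        by_cases hgn : (g, n) ∈ I
        · by_cases hcr : C ⟨(g, n), hgn⟩ = i
          · exact Or.inl ⟨hgn, hcr⟩
          · exact (lemB C hconn hp hq hgn hhm hpq
              (fun he => hcr (he.trans hcp)) (fun he => hcv (he.trans hcp))).elim
        · exact (lemA C hconn hq hp hhm hpq.symm hvc hgn).elim
  refine ⟨F1, F2, classFerrers 0, classFerrers 1, ?_, ?_, ?_, ?_, ?_⟩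
  · -- disjoint
    rw [Set.disjoint_left]
    rintro x ⟨hx, h0⟩ ⟨hx', h1⟩
    exact absurd (h0.symm.trans h1) (by decide)
  · -- union
    ext x
    constructor
    · rintro (⟨hx, -⟩ | ⟨hx, -⟩) <;> exact hx
    · intro hx
      rcases fin2_cases (C ⟨x, hx⟩) with h | h
      · exact Or.inl ⟨hx, h⟩
      · exact Or.inr ⟨hx, h⟩
  · -- independence of F1
    rintro p ⟨hp, hp0⟩ q ⟨hq, hq0⟩ hinc
    exact C.valid (show (IncompGraph I).Adj ⟨p, hp⟩ ⟨q, hq⟩ from hinc) (hp0.trans hq0.symm)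
  · -- independence of F2
    rintro p ⟨hp, hp0⟩ q ⟨hq, hq0⟩ hinc
    exact C.valid (show (IncompGraph I).Adj ⟨p, hp⟩ ⟨q, hq⟩ from hinc) (hp0.trans hq0.symm)
  · -- uniqueness
    intro G1 G2 hG1 hG2 hdisj huni
    classical
    have hG1I : G1 ⊆ I := huni ▸ Set.subset_union_left
    have hG2I : G2 ⊆ I := huni ▸ Set.subset_union_right
    have hind1 : ∀ p ∈ G1, ∀ q ∈ G1, ¬ Incompatible I p q := by
      rintro ⟨pg, pm⟩ hpG ⟨qg, qm⟩ hqG ⟨hpI, hqI, hc1, hc2⟩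
      rcases hG1 pg qg pm qm hpG hqG with hx | hx
      · exact hc1 (hG1I hx)
      · exact hc2 (hG1I hx)
    have hind2 : ∀ p ∈ G2, ∀ q ∈ G2, ¬ Incompatible I p q := by
      rintro ⟨pg, pm⟩ hpG ⟨qg, qm⟩ hqG ⟨hpI, hqI, hc1, hc2⟩
      rcases hG2 pg qg pm qm hpG hqG with hx | hx
      · exact hc1 (hG2I hx)
      · exact hc2 (hG2I hx)
    -- the coloring induced by the partition G1, G2
    have c'valid : ∀ {a b : I}, (IncompGraph I).Adj a b →
        (if (a : G × M) ∈ G1 then (0 : Fin 2) else 1) ≠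
        (if (b : G × M) ∈ G1 then (0 : Fin 2) else 1) := by
      intro a b hab
      have hinc : Incompatible I (a : G × M) (b : G × M) := hab
      by_cases haG : (a : G × M) ∈ G1 <;> by_cases hbG : (b : G × M) ∈ G1
      · exact absurd hinc (hind1 _ haG _ hbG)
      · simp [haG, hbG]
      · simp [haG, hbG]
      · have haG2 : (a : G × M) ∈ G2 := ((huni ▸ a.2 : (a : G×M) ∈ G1 ∪ G2).resolve_left haG)
        have hbG2 : (b : G × M) ∈ G2 := ((huni ▸ b.2 : (b : G×M) ∈ G1 ∪ G2).resolve_left hbG)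
        exact absurd hinc (hind2 _ haG2 _ hbG2)
    set c' : (IncompGraph I).Coloring (Fin 2) :=
      SimpleGraph.Coloring.mk (fun x => if (x : G × M) ∈ G1 then 0 else 1)
        (fun hab => c'valid hab) with hc'def
    have hc'app : ∀ x : I, c' x = if (x : G × M) ∈ G1 then 0 else 1 := fun x => rfl
    -- along any walk, the two colorings agree or disagree in lockstep
    have key : ∀ (x y : I), (C x = C y ↔ c' x = c' y) := by
      intro x y
      obtain ⟨W⟩ := hconn.preconnected x y
      induction W with
      | nil => simp
      | @cons u v w hadj W ih =>
        exact fin2_step _ _ _ _ _ _ (C.valid hadj) (c'.valid hadj) ih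
    -- characterize G1, G2 via c'
    have hG1c : ∀ x : G × M, x ∈ G1 ↔ ∃ hx : x ∈ I, c' ⟨x, hx⟩ = 0 := by
      intro x
      constructor
      · intro hx
        exact ⟨hG1I hx, by rw [hc'app]; simp [hx]⟩
      · rintro ⟨hx, hc⟩
        by_contra hno
        rw [hc'app] at hc
        simp [hno] at hc
    have hG2c : ∀ x : G × M, x ∈ G2 ↔ ∃ hx : x ∈ I, c' ⟨x, hx⟩ = 1 := by
      intro x
      constructor
      · intro hx
        have hnx : x ∉ G1 := Set.disjoint_right.mp hdisj hx
        exact ⟨hG2I hx, by rw [hc'app]; simp [hnx]⟩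
      · rintro ⟨hx, hc⟩
        have hnx : x ∉ G1 := by
          intro hx1
          rw [hc'app] at hc
          simp [hx1] at hc
        exact ((huni ▸ hx : x ∈ G1 ∪ G2).resolve_left hnx)
    -- empty or nonempty I
    rcases Set.eq_empty_or_nonempty I with hIe | ⟨p0, hp0⟩
    · left
      have e1 : G1 = ∅ := Set.eq_empty_of_subset_empty (hIe ▸ hG1I)
      have e2 : G2 = ∅ := Set.eq_empty_of_subset_empty (hIe ▸ hG2I)
      have e3 : F1 = ∅ := Set.eq_empty_of_subset_empty (hIe ▸ hF1I)
      have e4 : F2 = ∅ := Set.eq_empty_of_subset_empty (hIe ▸ hF2I)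
      exact ⟨e1.trans e3.symm, e2.trans e4.symm⟩
    · have key0 : ∀ (x : G × M) (hx : x ∈ I),
          (C ⟨x, hx⟩ = C ⟨p0, hp0⟩ ↔ c' ⟨x, hx⟩ = c' ⟨p0, hp0⟩) := fun x hx => key _ _
      by_cases hsame : C ⟨p0, hp0⟩ = c' ⟨p0, hp0⟩
      · left
        constructor
        · ext x
          rw [hG1c]
          exact ⟨fun ⟨hx, hc⟩ => ⟨hx, (fin2_tr _ _ _ _ (key0 x hx) hsame).trans hc⟩,
            fun ⟨hx, hc⟩ => ⟨hx, (fin2_tr _ _ _ _ (key0 x hx) hsame).symm.trans hc⟩⟩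
        · ext x
          rw [hG2c]
          exact ⟨fun ⟨hx, hc⟩ => ⟨hx, (fin2_tr _ _ _ _ (key0 x hx) hsame).trans hc⟩,
            fun ⟨hx, hc⟩ => ⟨hx, (fin2_tr _ _ _ _ (key0 x hx) hsame).symm.trans hc⟩⟩
      · right
        constructor
        · ext x
          rw [hG1c]
          constructor
          · rintro ⟨hx, hc⟩
            exact ⟨hx, ((fin2_tr' _ _ _ _ (key0 x hx) hsame).1).mp hc⟩
          · rintro ⟨hx, hc⟩
            exact ⟨hx, ((fin2_tr' _ _ _ _ (key0 x hx) hsame).1).mpr hc⟩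
        · ext x
          rw [hG2c]
          constructor
          · rintro ⟨hx, hc⟩
            exact ⟨hx, ((fin2_tr' _ _ _ _ (key0 x hx) hsame).2).mp hc⟩
          · rintro ⟨hx, hc⟩
            exact ⟨hx, ((fin2_tr' _ _ _ _ (key0 x hx) hsame).2).mpr hc⟩
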